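/- Let V_± = ker F^t, ker F for the pyramid nilpotent F, and decompose V_− = ⊕_{k=0}^{p_1−1} (V_− ∩ F^k V_+) and V_+ = ⊕_{k=0}^{p_1−1} (V_+ ∩ (F^t)^k V_−). Then for all 0 ≤ h, k ≤ p_1 − 1 one has the orthogonality relation 1_{V_+ ∩ (F^t)^k V_−} (F^t)^h 1_{V_−} F^h = δ_{h,k} · 1_{V_+ ∩ (F^t)^k V_−} in End(V). -/

import Mathlib

/-- A "box" of the pyramid attached to the partition `p₁^{r₁} ⋯ p_s^{r_s}`. The last
coordinate is the position of the box in its row, counted from the right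
(`0` = rightmost box). -/
abbrev PyramidBox {s : ℕ} (p r : Fin s → ℕ) : Type := (i : Fin s) × (Fin (r i) × Fin (p i))

/-- orthogonality relation for the pyramid.  With `F` the left shift, `Ft = Fᵗ`
the right shift, `Pminus = 1_{V₋}` the projection onto `V₋ = ker F` (leftmost boxes) and
`Qplus n = 1_{V₊ ∩ (Fᵗ)ⁿ V₋}` the projection onto rightmost boxes of rows of length `n+1`,
for all `0 ≤ h, k ≤ p₁ − 1` one has
`1_{V₊ ∩ (Fᵗ)^k V₋} (Fᵗ)^h 1_{V₋} F^h = δ_{h,k} · 1_{V₊ ∩ (Fᵗ)^k V₋}` in `End(V)`. -/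
theorem stmt19 {K : Type*} [Field K] [CharZero K]
    {V : Type*} [AddCommGroup V] [Module K V]
    {s : ℕ} (hs : 0 < s) (p r : Fin s → ℕ) (hp : StrictAnti p)
    (b : Module.Basis (PyramidBox p r) K V)
    (F Ft Pminus : Module.End K V) (Qplus : ℕ → Module.End K V)
    (hF : ∀ x : PyramidBox p r,
      F (b x) = if h : (x.2.2 : ℕ) + 1 < p x.1
        then b ⟨x.1, x.2.1, ⟨(x.2.2 : ℕ) + 1, h⟩⟩ else 0)
    (hFt : ∀ x : PyramidBox p r,
      Ft (b x) = if 0 < (x.2.2 : ℕ)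
        then b ⟨x.1, x.2.1, ⟨(x.2.2 : ℕ) - 1, Nat.lt_of_le_of_lt (Nat.sub_le _ _) x.2.2.isLt⟩⟩
        else 0)
    (hPminus : ∀ x : PyramidBox p r,
      Pminus (b x) = if (x.2.2 : ℕ) + 1 = p x.1 then b x else 0)
    (hQplus : ∀ (n : ℕ) (x : PyramidBox p r),
      Qplus n (b x) = if ((x.2.2 : ℕ) = 0 ∧ p x.1 = n + 1) then b x else 0)
    (h k : ℕ) (hh : h < p ⟨0, hs⟩) (hk : k < p ⟨0, hs⟩) :
    Qplus k * Ft ^ h * Pminus * F ^ h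
      = if h = k then Qplus k else (0 : Module.End K V) := by
  have hFpow : ∀ (n : ℕ) (x : PyramidBox p r),
      (F ^ n) (b x) = if hn : (x.2.2 : ℕ) + n < p x.1
        then b ⟨x.1, x.2.1, ⟨(x.2.2 : ℕ) + n, hn⟩⟩ else 0 := by
    intro n
    induction n with
    | zero =>
      intro x
      rw [pow_zero, Module.End.one_apply, dif_pos (by simpa using x.2.2.isLt)]
      simp
    | succ n ih =>
      intro x
      rw [pow_succ', Module.End.mul_apply, ih x]
      by_cases h1 : (x.2.2 : ℕ) + n < p x.1
      · rw [dif_pos h1, hF]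
        dsimp only
        by_cases h2 : (x.2.2 : ℕ) + n + 1 < p x.1
        · rw [dif_pos h2, dif_pos (by omega : (x.2.2 : ℕ) + (n + 1) < p x.1)]
          rfl
        · rw [dif_neg h2, dif_neg (by omega : ¬ ((x.2.2 : ℕ) + (n + 1) < p x.1))]
      · rw [dif_neg h1, map_zero, dif_neg (by omega : ¬ ((x.2.2 : ℕ) + (n + 1) < p x.1))]
  have hFtpow : ∀ (n : ℕ) (x : PyramidBox p r),
      (Ft ^ n) (b x) = if n ≤ (x.2.2 : ℕ)
        then b ⟨x.1, x.2.1, ⟨(x.2.2 : ℕ) - n,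
          Nat.lt_of_le_of_lt (Nat.sub_le _ _) x.2.2.isLt⟩⟩ else 0 := by
    intro n
    induction n with
    | zero =>
      intro x
      rw [pow_zero, Module.End.one_apply, if_pos (Nat.zero_le _)]
      simp
    | succ n ih =>
      intro x
      rw [pow_succ', Module.End.mul_apply, ih x]
      by_cases h1 : n ≤ (x.2.2 : ℕ)
      · rw [if_pos h1, hFt]
        dsimp only
        by_cases h2 : 0 < (x.2.2 : ℕ) - n
        · rw [if_pos h2, if_pos (by omega : n + 1 ≤ (x.2.2 : ℕ))]
          rfl
        · rw [if_neg h2, if_neg (by omega : ¬ (n + 1 ≤ (x.2.2 : ℕ)))]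
      · rw [if_neg h1, map_zero, if_neg (by omega : ¬ (n + 1 ≤ (x.2.2 : ℕ)))]
  refine Module.Basis.ext b fun x => ?_
  obtain ⟨i, a, j⟩ := x
  rw [Module.End.mul_apply, Module.End.mul_apply, Module.End.mul_apply, hFpow]
  dsimp only
  by_cases h1 : (j : ℕ) + h < p i
  · rw [dif_pos h1, hPminus]
    dsimp only
    by_cases h2 : (j : ℕ) + h + 1 = p i
    · rw [if_pos h2, hFtpow]
      dsimp only
      rw [if_pos (by omega)]
      simp only [Nat.add_sub_cancel, Fin.eta]
      rw [hQplus]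
      dsimp only
      by_cases h3 : (j : ℕ) = 0 ∧ p i = k + 1
      · rw [if_pos h3, if_pos (by omega : h = k), hQplus, if_pos h3]
      · rw [if_neg h3]
        by_cases h4 : h = k
        · rw [if_pos h4, hQplus, if_neg h3]
        · rw [if_neg h4, LinearMap.zero_apply]
    · rw [if_neg h2, map_zero, map_zero]
      by_cases h4 : h = k
      · rw [if_pos h4, hQplus, if_neg (by dsimp only; omega)]
      · rw [if_neg h4, LinearMap.zero_apply]
  · rw [dif_neg h1, map_zero, map_zero, map_zero]
    by_cases h4 : h = k
    · rw [if_pos h4, hQplus, if_neg (by dsimp only; omega)]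
    · rw [if_neg h4, LinearMap.zero_apply]
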